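/- Let H₀ be a Hermitian d×d complex matrix with largest eigenvalue E_max and smallest eigenvalue E_min, with E_max > E_min. Let ψ₀ and ψ_T be unit vectors in ℂ^d, set ρ₀ = |ψ₀⟩⟨ψ₀| and ρ_T = |ψ_T⟩⟨ψ_T|, let D_B(ψ_T, ψ₀) = √(2·(1 − |⟨ψ_T, ψ₀⟩|)) be the Bures distance, and let Var_{ψ_T}(H₀) = ⟨ψ_T, H₀²ψ_T⟩ − ⟨ψ_T, H₀ψ_T⟩². If Var_{ψ_T}(H₀) > 0, then ‖ρ_T − ρ₀‖₁ / (E_max − E_min) ≤ D_B(ψ_T, ψ₀) / √(Var_{ψ_T}(H₀)), where ‖A‖₁ = Tr√(AᴴA) is the trace norm. -/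

import Mathlib

open Matrix
open scoped ComplexOrder

/-- Trace norm (Schatten 1-norm): `‖A‖₁ = Tr √(Aᴴ A)`. -/
noncomputable def PosSemidef.sqrt' {d : ℕ} {B : Matrix (Fin d) (Fin d) ℂ} (hB : B.PosSemidef) :
    Matrix (Fin d) (Fin d) ℂ :=
  (hB.1.eigenvectorUnitary : Matrix (Fin d) (Fin d) ℂ) *
    diagonal (((↑) : ℝ → ℂ) ∘ Real.sqrt ∘ hB.1.eigenvalues) *
    star (hB.1.eigenvectorUnitary : Matrix (Fin d) (Fin d) ℂ)

noncomputable def traceNorm {d : ℕ} (A : Matrix (Fin d) (Fin d) ℂ) : ℝ :=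
  ((PosSemidef.sqrt' (Matrix.posSemidef_conjTranspose_mul_self A)).trace).re

/-- The rank-one projection `|u⟩⟨v|` as a d×d matrix. -/
def outer {d : ℕ} (u v : Fin d → ℂ) : Matrix (Fin d) (Fin d) ℂ :=
  Matrix.vecMulVec u (star v)

/-- The Bures distance between pure states: `D_B(ψ, φ) = √(2(1 − |⟨ψ, φ⟩|))`,
with `⟨ψ, φ⟩ = star ψ ⬝ᵥ φ` the standard Hermitian inner product on ℂ^d. -/
noncomputable def buresDist {d : ℕ} (ψ φ : Fin d → ℂ) : ℝ :=
  Real.sqrt (2 * (1 - ‖star ψ ⬝ᵥ φ‖))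

/-- The variance of a Hermitian matrix `H` in the state `ψ`:
`Var_ψ(H) = ⟨ψ, H²ψ⟩ − ⟨ψ, Hψ⟩²` (expectation values of Hermitian matrices are real,
so their real parts are taken). -/
noncomputable def matVariance {d : ℕ} (H : Matrix (Fin d) (Fin d) ℂ)
    (ψ : Fin d → ℂ) : ℝ :=
  (star ψ ⬝ᵥ (H * H).mulVec ψ).re - ((star ψ ⬝ᵥ H.mulVec ψ).re) ^ 2

lemma trace_sqrt {d : ℕ} {B : Matrix (Fin d) (Fin d) ℂ} (hB : B.PosSemidef) :
    (PosSemidef.sqrt' hB).trace = ∑ i, (Real.sqrt (hB.1.eigenvalues i) : ℂ) := by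
  rw [PosSemidef.sqrt', trace_mul_cycle]
  rw [Unitary.coe_star_mul_self, one_mul, trace_diagonal]
  rfl

lemma trace_herm {d : ℕ} {B : Matrix (Fin d) (Fin d) ℂ} (hB : B.IsHermitian) :
    B.trace = ∑ i, (hB.eigenvalues i : ℂ) := by
  conv_lhs => rw [hB.spectral_theorem, Unitary.conjStarAlgAut_apply]
  rw [trace_mul_cycle, Unitary.coe_star_mul_self, one_mul, trace_diagonal]
  rfl

lemma abs_dot_le_one {d : ℕ} (u v : Fin d → ℂ)
    (hu : star u ⬝ᵥ u = 1) (hv : star v ⬝ᵥ v = 1) :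
    ‖star u ⬝ᵥ v‖ ≤ 1 := by
  have h := norm_inner_le_norm (𝕜 := ℂ)
    ((WithLp.equiv 2 (Fin d → ℂ)).symm u) ((WithLp.equiv 2 (Fin d → ℂ)).symm v)
  rw [WithLp.equiv_symm_apply, EuclideanSpace.inner_toLp_toLp, dotProduct_comm] at h
  have hnu : ‖(WithLp.equiv 2 (Fin d → ℂ)).symm u‖ = 1 := by
    rw [norm_eq_sqrt_re_inner (𝕜 := ℂ), WithLp.equiv_symm_apply, EuclideanSpace.inner_toLp_toLp,
      dotProduct_comm, hu]
    simp
  have hnv : ‖(WithLp.equiv 2 (Fin d → ℂ)).symm v‖ = 1 := by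
    rw [norm_eq_sqrt_re_inner (𝕜 := ℂ), WithLp.equiv_symm_apply, EuclideanSpace.inner_toLp_toLp,
      dotProduct_comm, hv]
    simp
  rw [WithLp.equiv_symm_apply] at hnu hnv
  rw [hnu, hnv, mul_one] at h
  exact h

lemma outer_mul_outer {d : ℕ} (u v w x : Fin d → ℂ) :
    outer u v * outer w x = (star v ⬝ᵥ w) • outer u x := by
  ext i k
  simp [outer, vecMulVec_apply, mul_apply, dotProduct, Finset.mul_sum, Finset.sum_mul]
  congr 1; ext j; ring

lemma trace_outer {d : ℕ} (u v : Fin d → ℂ) :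
    (outer u v).trace = star v ⬝ᵥ u := by
  rw [outer, vecMulVec_eq (Fin 1), trace_replicateCol_mul_replicateRow, dotProduct_comm]

lemma rank_outer_sub {d : ℕ} (u v : Fin d → ℂ) :
    (outer u u - outer v v).rank ≤ 2 := by
  set X : Matrix (Fin d) (Fin 2) ℂ := Matrix.of fun i j => if j = 0 then u i else v i
  set Y : Matrix (Fin 2) (Fin d) ℂ :=
    Matrix.of fun j k => if j = 0 then star (u k) else -star (v k)
  have hXY : outer u u - outer v v = X * Y := by
    ext i k
    simp [X, Y, mul_apply, Fin.sum_univ_two, outer, vecMulVec_apply]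
    ring
  rw [hXY]
  exact (Matrix.rank_mul_le_left X Y).trans (by simpa using X.rank_le_card_width)

lemma traceNorm_le_sqrt {d : ℕ} (A : Matrix (Fin d) (Fin d) ℂ) :
    traceNorm A ≤ Real.sqrt ((A.rank : ℝ) * (Aᴴ * A).trace.re) := by
  set hB := Matrix.posSemidef_conjTranspose_mul_self A with hBdef
  have h1 : traceNorm A = ∑ i, Real.sqrt (hB.1.eigenvalues i) := by
    rw [traceNorm, trace_sqrt]
    simp
  have hnn : ∀ i, 0 ≤ hB.1.eigenvalues i := hB.eigenvalues_nonneg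
  have htr : (Aᴴ * A).trace.re = ∑ i, hB.1.eigenvalues i := by
    rw [trace_herm hB.1]; simp
  set S := Finset.univ.filter (fun i => hB.1.eigenvalues i ≠ 0) with hS
  have hcard : (S.card : ℕ) = A.rank := by
    rw [← Matrix.rank_conjTranspose_mul_self A, hB.1.rank_eq_card_non_zero_eigs]
    simp [hS, Fintype.card_subtype]
  have hsum : ∑ i, Real.sqrt (hB.1.eigenvalues i)
      = ∑ i ∈ S, Real.sqrt (hB.1.eigenvalues i) := by
    symm
    apply Finset.sum_filter_of_ne
    intro i _ h
    intro h0
    exact h (by rw [h0, Real.sqrt_zero])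
  have key : (∑ i ∈ S, Real.sqrt (hB.1.eigenvalues i)) ^ 2
      ≤ (A.rank : ℝ) * (∑ i, hB.1.eigenvalues i) := by
    calc (∑ i ∈ S, Real.sqrt (hB.1.eigenvalues i)) ^ 2
        ≤ S.card * ∑ i ∈ S, (Real.sqrt (hB.1.eigenvalues i)) ^ 2 :=
          sq_sum_le_card_mul_sum_sq
      _ = (S.card : ℝ) * ∑ i ∈ S, hB.1.eigenvalues i := by
          congr 1
          exact Finset.sum_congr rfl fun i _ => Real.sq_sqrt (hnn i)
      _ = (A.rank : ℝ) * ∑ i ∈ S, hB.1.eigenvalues i := by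
          rw [hcard]
      _ ≤ (A.rank : ℝ) * ∑ i, hB.1.eigenvalues i := by
          apply mul_le_mul_of_nonneg_left _ (by positivity)
          exact Finset.sum_le_sum_of_subset_of_nonneg (Finset.filter_subset _ _)
            (fun i _ _ => hnn i)
  rw [h1, hsum, htr]
  have hpos : 0 ≤ ∑ i ∈ S, Real.sqrt (hB.1.eigenvalues i) :=
    Finset.sum_nonneg fun i _ => Real.sqrt_nonneg _
  calc ∑ i ∈ S, Real.sqrt (hB.1.eigenvalues i)
      = Real.sqrt ((∑ i ∈ S, Real.sqrt (hB.1.eigenvalues i)) ^ 2) :=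
        (Real.sqrt_sq hpos).symm
    _ ≤ Real.sqrt ((A.rank : ℝ) * ∑ i, hB.1.eigenvalues i) := Real.sqrt_le_sqrt key

lemma star_dot_symm {d : ℕ} (u v : Fin d → ℂ) :
    star v ⬝ᵥ u = (starRingEnd ℂ) (star u ⬝ᵥ v) := by
  simp [dotProduct, map_sum, mul_comm]

lemma trace_sq_outer {d : ℕ} (u v : Fin d → ℂ)
    (hu : star u ⬝ᵥ u = 1) (hv : star v ⬝ᵥ v = 1) :
    ((outer u u - outer v v)ᴴ * (outer u u - outer v v)).trace.re
      = 2 - 2 * ‖star u ⬝ᵥ v‖ ^ 2 := by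
  have hH : (outer u u - outer v v)ᴴ = outer u u - outer v v := by
    ext i j
    simp [outer, vecMulVec_apply, conjTranspose_apply]
    ring
  rw [hH, sub_mul, mul_sub, mul_sub, outer_mul_outer, outer_mul_outer,
    outer_mul_outer, outer_mul_outer]
  simp only [trace_sub, trace_smul, trace_outer, hu, hv]
  rw [star_dot_symm u v]
  set c := star u ⬝ᵥ v with hc
  simp only [smul_eq_mul, mul_one]
  have h1 : c * (starRingEnd ℂ) c = (‖c‖ ^ 2 : ℝ) := by
    rw [Complex.mul_conj, Complex.sq_norm]
  have h2 : (starRingEnd ℂ) c * c = (‖c‖ ^ 2 : ℝ) := by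
    rw [mul_comm, Complex.mul_conj, Complex.sq_norm]
  rw [h1, h2]
  simp [Complex.sub_re]
  rw [← Complex.ofReal_pow, Complex.ofReal_re]
  ring

lemma tn_bound {d : ℕ} (u v : Fin d → ℂ)
    (hu : star u ⬝ᵥ u = 1) (hv : star v ⬝ᵥ v = 1) :
    traceNorm (outer u u - outer v v)
      ≤ 2 * Real.sqrt (2 * (1 - ‖star u ⬝ᵥ v‖)) := by
  set a := ‖star u ⬝ᵥ v‖ with ha
  have ha0 : 0 ≤ a := norm_nonneg _
  have ha1 : a ≤ 1 := abs_dot_le_one u v hu hv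
  calc traceNorm (outer u u - outer v v)
      ≤ Real.sqrt (((outer u u - outer v v).rank : ℝ)
          * ((outer u u - outer v v)ᴴ * (outer u u - outer v v)).trace.re) :=
        traceNorm_le_sqrt _
    _ ≤ Real.sqrt (4 * (2 * (1 - a))) := by
        apply Real.sqrt_le_sqrt
        rw [trace_sq_outer u v hu hv, ← ha]
        have hr : ((outer u u - outer v v).rank : ℝ) ≤ 2 := by
          have := rank_outer_sub u v
          exact_mod_cast this
        have hr0 : (0:ℝ) ≤ ((outer u u - outer v v).rank : ℝ) := Nat.cast_nonneg _
        have htr0 : (0:ℝ) ≤ 2 - 2 * a ^ 2 := by nlinarith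
        nlinarith
    _ = 2 * Real.sqrt (2 * (1 - a)) := by
        rw [Real.sqrt_mul (by norm_num : (0:ℝ) ≤ 4)]
        rw [show (4:ℝ) = 2^2 by norm_num, Real.sqrt_sq (by norm_num : (0:ℝ) ≤ 2)]

lemma expec_diag {d : ℕ} {H : Matrix (Fin d) (Fin d) ℂ} (hH : H.IsHermitian)
    (ψ : Fin d → ℂ) (f : Fin d → ℝ) :
    star ψ ⬝ᵥ ((hH.eigenvectorUnitary.1 * diagonal ((RCLike.ofReal : ℝ → ℂ) ∘ f)
        * star hH.eigenvectorUnitary.1) *ᵥ ψ)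
      = ((∑ i, Complex.normSq ((star hH.eigenvectorUnitary.1 *ᵥ ψ) i) * f i : ℝ) : ℂ) := by
  set U := hH.eigenvectorUnitary.1 with hU
  set c := star U *ᵥ ψ with hcdef
  have hsc : star c = star ψ ᵥ* U := by
    rw [hcdef, star_mulVec]
    congr 1
    simp [Matrix.star_eq_conjTranspose]
  rw [← mulVec_mulVec, ← mulVec_mulVec]
  rw [show star ψ ⬝ᵥ (U *ᵥ (diagonal ((RCLike.ofReal : ℝ → ℂ) ∘ f) *ᵥ (star U *ᵥ ψ)))
      = (star ψ ᵥ* U) ⬝ᵥ (diagonal ((RCLike.ofReal : ℝ → ℂ) ∘ f) *ᵥ c) from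
    (dotProduct_mulVec _ _ _)]
  rw [← hsc]
  simp only [dotProduct, mulVec_diagonal, Pi.star_apply]
  push_cast
  apply Finset.sum_congr rfl
  intro i _
  simp only [Function.comp_apply, Complex.star_def]
  rw [Complex.normSq_eq_conj_mul_self]
  rw [← mul_assoc]
  exact mul_right_comm ((starRingEnd ℂ) (c i)) ((f i : ℝ) : ℂ) (c i)

lemma expec_spectral {d : ℕ} {H : Matrix (Fin d) (Fin d) ℂ} (hH : H.IsHermitian)
    (ψ : Fin d → ℂ) (hψ : star ψ ⬝ᵥ ψ = 1) :
    ∃ p : Fin d → ℝ, (∀ i, 0 ≤ p i) ∧ (∑ i, p i) = 1 ∧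
      (star ψ ⬝ᵥ H.mulVec ψ).re = ∑ i, p i * hH.eigenvalues i ∧
      (star ψ ⬝ᵥ (H * H).mulVec ψ).re = ∑ i, p i * (hH.eigenvalues i) ^ 2 := by
  set U := hH.eigenvectorUnitary.1 with hU
  set c := star U *ᵥ ψ with hcdef
  have hUU : U * star U = 1 := (Matrix.mem_unitaryGroup_iff).mp hH.eigenvectorUnitary.2
  have hUU' : star U * U = 1 := (Matrix.mem_unitaryGroup_iff').mp hH.eigenvectorUnitary.2
  refine ⟨fun i => Complex.normSq (c i), fun i => Complex.normSq_nonneg _, ?_, ?_, ?_⟩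
  · have hsc : star c = star ψ ᵥ* U := by
      rw [hcdef, star_mulVec]
      congr 1
      simp [Matrix.star_eq_conjTranspose]
    have h1 : star c ⬝ᵥ c = 1 := by
      rw [hsc, hcdef, dotProduct_mulVec, vecMul_vecMul, hUU, vecMul_one, hψ]
    have h2 : star c ⬝ᵥ c = ((∑ i, Complex.normSq (c i) : ℝ) : ℂ) := by
      simp only [dotProduct, Pi.star_apply]
      push_cast
      apply Finset.sum_congr rfl
      intro i _
      rw [Complex.star_def, ← Complex.normSq_eq_conj_mul_self]
    rw [h2] at h1
    exact_mod_cast h1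
  · have h := expec_diag hH ψ hH.eigenvalues
    conv_lhs => rw [hH.spectral_theorem, Unitary.conjStarAlgAut_apply]
    rw [h]
    simp
    rfl
  · have hHH : H * H = U * diagonal ((RCLike.ofReal : ℝ → ℂ) ∘ fun i => (hH.eigenvalues i)^2) * star U := by
      conv_lhs => rw [hH.spectral_theorem, Unitary.conjStarAlgAut_apply]
      rw [← hU]
      have key : (U * diagonal (RCLike.ofReal ∘ hH.eigenvalues) * star U)
          * (U * diagonal (RCLike.ofReal ∘ hH.eigenvalues) * star U)
          = U * (diagonal (RCLike.ofReal ∘ hH.eigenvalues) * ((star U * U)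
            * diagonal (RCLike.ofReal ∘ hH.eigenvalues))) * star U := by
        simp only [Matrix.mul_assoc]
      rw [key, hUU', Matrix.one_mul, diagonal_mul_diagonal]
      have hfun : (fun i => (RCLike.ofReal ∘ hH.eigenvalues) i * (RCLike.ofReal ∘ hH.eigenvalues) i)
          = ((RCLike.ofReal : ℝ → ℂ) ∘ fun i => (hH.eigenvalues i)^2) := by
        funext i
        simp only [Function.comp_apply]
        rw [pow_two, RCLike.ofReal_mul]
      rw [hfun]
    rw [hHH, expec_diag hH ψ]
    simp [← Complex.ofReal_pow]
    rfl

lemma variance_le {d : ℕ} (hd : 1 ≤ d) {H : Matrix (Fin d) (Fin d) ℂ}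
    (hH : H.IsHermitian) (ψ : Fin d → ℂ) (hψ : star ψ ⬝ᵥ ψ = 1) :
    matVariance H ψ ≤ ((⨆ i, hH.eigenvalues i) - (⨅ i, hH.eigenvalues i)) ^ 2 / 4 := by
  haveI : Nonempty (Fin d) := ⟨⟨0, hd⟩⟩
  obtain ⟨p, hp0, hp1, hm1, hm2⟩ := expec_spectral hH ψ hψ
  set lam := hH.eigenvalues
  set m := ⨅ i, lam i with hm
  set M := ⨆ i, lam i with hM
  have hml : ∀ i, m ≤ lam i := fun i => ciInf_le (Finite.bddBelow_range _) i
  have hlM : ∀ i, lam i ≤ M := fun i => le_ciSup (Finite.bddAbove_range _) i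
  set μ := ∑ i, p i * lam i with hμ
  have hsq : ∑ i, p i * (lam i) ^ 2 ≤ (m + M) * μ - m * M := by
    have : ∀ i, p i * (lam i) ^ 2 ≤ (m + M) * (p i * lam i) - m * M * p i := by
      intro i
      have h1 : 0 ≤ (M - lam i) * (lam i - m) := mul_nonneg (by linarith [hlM i]) (by linarith [hml i])
      nlinarith [hp0 i]
    calc ∑ i, p i * (lam i) ^ 2
        ≤ ∑ i, ((m + M) * (p i * lam i) - m * M * p i) := Finset.sum_le_sum fun i _ => this i
      _ = (m + M) * μ - m * M := by
          rw [Finset.sum_sub_distrib, ← Finset.mul_sum, ← Finset.mul_sum, hp1, mul_one, hμ]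
  have hmμ : m ≤ μ := by
    calc m = ∑ i, p i * m := by rw [← Finset.sum_mul, hp1, one_mul]
      _ ≤ μ := Finset.sum_le_sum fun i _ => mul_le_mul_of_nonneg_left (hml i) (hp0 i)
  have hμM : μ ≤ M := by
    calc μ ≤ ∑ i, p i * M := Finset.sum_le_sum fun i _ => mul_le_mul_of_nonneg_left (hlM i) (hp0 i)
      _ = M := by rw [← Finset.sum_mul, hp1, one_mul]
  rw [matVariance, hm1, hm2]
  nlinarith [hsq, sq_nonneg (2 * μ - m - M)]

lemma buresDist_nonneg' {d : ℕ} (u v : Fin d → ℂ) :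
    0 ≤ Real.sqrt (2 * (1 - ‖star u ⬝ᵥ v‖)) := Real.sqrt_nonneg _

lemma traceNorm_nonneg' {d : ℕ} (A : Matrix (Fin d) (Fin d) ℂ) : 0 ≤ traceNorm A := by
  have h1 : traceNorm A = ∑ i, Real.sqrt
      ((Matrix.posSemidef_conjTranspose_mul_self A).1.eigenvalues i) := by
    rw [traceNorm, trace_sqrt]
    simp
  rw [h1]
  exact Finset.sum_nonneg fun i _ => Real.sqrt_nonneg _


/-- Eq. (33) of Appendix C: for a Hermitian matrix `H₀` with largest
eigenvalue `E_max` and smallest eigenvalue `E_min`, `E_max > E_min`, and unit vectors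
`ψ₀, ψ_T ∈ ℂ^d` with `Var_{ψ_T}(H₀) > 0`,
`‖ρ_T − ρ₀‖₁ / (E_max − E_min) ≤ D_B(ψ_T, ψ₀) / √(Var_{ψ_T}(H₀))`,
where `ρ₀ = |ψ₀⟩⟨ψ₀|` and `ρ_T = |ψ_T⟩⟨ψ_T|`. -/
theorem bound_comparison_closed_system (d : ℕ) (hd : 1 ≤ d)
    (H₀ : Matrix (Fin d) (Fin d) ℂ) (hH₀ : H₀.IsHermitian)
    (hgap : (⨅ i, hH₀.eigenvalues i) < (⨆ i, hH₀.eigenvalues i))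
    (ψ₀ ψT : Fin d → ℂ) (hψ₀ : star ψ₀ ⬝ᵥ ψ₀ = 1) (hψT : star ψT ⬝ᵥ ψT = 1)
    (hvar : 0 < matVariance H₀ ψT) :
    traceNorm (outer ψT ψT - outer ψ₀ ψ₀)
        / ((⨆ i, hH₀.eigenvalues i) - (⨅ i, hH₀.eigenvalues i))
      ≤ buresDist ψT ψ₀ / Real.sqrt (matVariance H₀ ψT) := by
  set m := ⨅ i, hH₀.eigenvalues i
  set M := ⨆ i, hH₀.eigenvalues i
  set T := traceNorm (outer ψT ψT - outer ψ₀ ψ₀)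
  set D := buresDist ψT ψ₀
  set V := matVariance H₀ ψT
  have hR : (0:ℝ) < M - m := by linarith
  have hsV : 0 < Real.sqrt V := Real.sqrt_pos.mpr hvar
  have hT : T ≤ 2 * D := tn_bound ψT ψ₀ hψT hψ₀
  have hT0 : 0 ≤ T := traceNorm_nonneg' _
  have hD0 : 0 ≤ D := Real.sqrt_nonneg _
  have hVle : V ≤ (M - m) ^ 2 / 4 := variance_le hd hH₀ ψT hψT
  have hsVle : Real.sqrt V ≤ (M - m) / 2 := by
    have : Real.sqrt V ≤ Real.sqrt ((M - m) ^ 2 / 4) := Real.sqrt_le_sqrt hVle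
    rwa [show ((M - m) ^ 2 / 4 : ℝ) = ((M - m)/2) ^ 2 by ring,
      Real.sqrt_sq (by linarith)] at this
  rw [div_le_div_iff₀ hR hsV]
  nlinarith
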